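/- arXiv:2112.07456 — 5 statements merged into one kernel-verified Lean document; each statement's English description precedes it below -/
import Mathlib

section
/- Let v₁ > v₂ > ... > vₙ > 0 and w₁ > w₂ > ... > wₙ > 0 be strictly decreasing positive real sequences. Then for every nonzero n×n real matrix M that is doubly hyperdominant (off-diagonal entries ≤ 0, all row sums ≥ 0, all column sums ≥ 0), we have ∑_{i,j} M_{ij} v_i w_j > 0. -/
noncomputable def stepCoef {n : ℕ} (v : Fin n → ℝ) (k : Fin n) : ℝ :=
  if h : (k : ℕ) + 1 < n then v k - v ⟨(k : ℕ) + 1, h⟩ else v k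

lemma stepCoef_pos {n : ℕ} {v : Fin n → ℝ} (hv : StrictAnti v) (hvpos : ∀ i, 0 < v i)
    (k : Fin n) : 0 < stepCoef v k := by
  unfold stepCoef
  by_cases h : (k : ℕ) + 1 < n
  · rw [dif_pos h]
    have : v ⟨(k : ℕ) + 1, h⟩ < v k := hv (by simp [Fin.lt_def])
    linarith
  · rw [dif_neg h]; exact hvpos k

lemma telescope {n : ℕ} (v : Fin n → ℝ) (i : Fin n) :
    ∑ k : Fin n, (if i ≤ k then stepCoef v k else 0) = v i := by
  classical
  set V : ℕ → ℝ := fun m => if h : m < n then v ⟨m, h⟩ else 0 with hV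
  have hstep : ∀ k : Fin n, stepCoef v k = V (k : ℕ) - V ((k : ℕ) + 1) := by
    intro k
    unfold stepCoef
    by_cases h : (k : ℕ) + 1 < n
    · rw [dif_pos h]; simp [hV, h, k.isLt]
    · rw [dif_neg h]; simp [hV, h, k.isLt]
  calc ∑ k : Fin n, (if i ≤ k then stepCoef v k else 0)
      = ∑ k : Fin n, (fun m => if (i : ℕ) ≤ m then V m - V (m + 1) else 0) (k : ℕ) := by
        apply Finset.sum_congr rfl
        intro k _
        simp only [Fin.le_def, hstep]
    _ = ∑ m ∈ Finset.range n, (if (i : ℕ) ≤ m then V m - V (m + 1) else 0) :=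
        Fin.sum_univ_eq_sum_range (fun m => if (i : ℕ) ≤ m then V m - V (m + 1) else 0) n
    _ = ∑ m ∈ Finset.Ico (i : ℕ) n, (V m - V (m + 1)) := by
        rw [← Finset.sum_filter]
        congr 1
        ext m
        simp [Finset.mem_filter, Finset.mem_range, Finset.mem_Ico, and_comm]
    _ = V (i : ℕ) - V n := by
        rw [Finset.sum_Ico_eq_sub _ (le_of_lt i.isLt)]
        rw [Finset.sum_range_sub' V, Finset.sum_range_sub' V]
        ring
    _ = v i := by simp [hV, i.isLt]

theorem stmt2 {n : ℕ} (v w : Fin n → ℝ)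
    (hv : StrictAnti v) (hvpos : ∀ i, 0 < v i)
    (hw : StrictAnti w) (hwpos : ∀ i, 0 < w i)
    (M : Matrix (Fin n) (Fin n) ℝ) (hM0 : M ≠ 0)
    (hoff : ∀ i j, i ≠ j → M i j ≤ 0)
    (hrow : ∀ i, 0 ≤ ∑ j, M i j)
    (hcol : ∀ j, 0 ≤ ∑ i, M i j) :
    0 < ∑ i, ∑ j, M i j * v i * w j := by
  classical
  set S : Fin n → Fin n → ℝ := fun k l => ∑ i ∈ Finset.Iic k, ∑ j ∈ Finset.Iic l, M i j
    with hSdef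
  -- Nonnegativity of all leading rectangular sums.
  have hS : ∀ k l, 0 ≤ S k l := by
    intro k l
    rcases le_total (k : ℕ) (l : ℕ) with h | h
    · apply Finset.sum_nonneg
      intro i hi
      have hik : (i : ℕ) ≤ k := Fin.le_def.mp (Finset.mem_Iic.mp hi)
      have h1 : ∑ j ∈ Finset.Iic l, M i j + ∑ j ∈ (Finset.Iic l)ᶜ, M i j = ∑ j, M i j :=
        Finset.sum_add_sum_compl _ _
      have h2 : ∑ j ∈ (Finset.Iic l)ᶜ, M i j ≤ 0 := by
        apply Finset.sum_nonpos
        intro j hj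
        have hjl : ¬ j ≤ l := by simpa using hj
        have hjl' : (l : ℕ) < j := Fin.lt_def.mp (lt_of_not_ge hjl)
        apply hoff
        intro hij
        rw [hij] at hik
        omega
      linarith [hrow i]
    · rw [hSdef]
      simp only
      rw [show (∑ i ∈ Finset.Iic k, ∑ j ∈ Finset.Iic l, M i j) = ∑ j ∈ Finset.Iic l, ∑ i ∈ Finset.Iic k, M i j from Finset.sum_comm]
      apply Finset.sum_nonneg
      intro j hj
      have hjl : (j : ℕ) ≤ l := Fin.le_def.mp (Finset.mem_Iic.mp hj)
      have h1 : ∑ i ∈ Finset.Iic k, M i j + ∑ i ∈ (Finset.Iic k)ᶜ, M i j = ∑ i, M i j :=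
        Finset.sum_add_sum_compl _ _
      have h2 : ∑ i ∈ (Finset.Iic k)ᶜ, M i j ≤ 0 := by
        apply Finset.sum_nonpos
        intro i hi
        have hik : ¬ i ≤ k := by simpa using hi
        have hik' : (k : ℕ) < i := Fin.lt_def.mp (lt_of_not_ge hik)
        apply hoff
        intro hij
        rw [← hij] at hjl
        omega
      linarith [hcol j]
  -- Some leading rectangular sum is positive.
  have hex : ∃ k l, 0 < S k l := by
    by_contra hcon
    push_neg at hcon
    have hS0 : ∀ k l, S k l = 0 := fun k l => le_antisymm (hcon k l) (hS k l)
    apply hM0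
    have key : ∀ m : ℕ, ∀ i j : Fin n, (i : ℕ) + (j : ℕ) = m → M i j = 0 := by
      intro m
      induction m using Nat.strong_induction_on with
      | _ m ih =>
        intro i j hm
        have h1 : S i j = ∑ p ∈ Finset.Iic i ×ˢ Finset.Iic j, M p.1 p.2 := by
          exact (Finset.sum_product' _ _ _).symm
        have hmem : (i, j) ∈ Finset.Iic i ×ˢ Finset.Iic j := by simp
        have h2 : M i j + ∑ p ∈ (Finset.Iic i ×ˢ Finset.Iic j).erase (i, j), M p.1 p.2
            = ∑ p ∈ Finset.Iic i ×ˢ Finset.Iic j, M p.1 p.2 :=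
          Finset.add_sum_erase _ (fun p : Fin n × Fin n => M p.1 p.2) hmem
        have h3 : ∑ p ∈ (Finset.Iic i ×ˢ Finset.Iic j).erase (i, j), M p.1 p.2 = 0 := by
          apply Finset.sum_eq_zero
          intro p hp
          obtain ⟨hne, hpmem⟩ := Finset.mem_erase.mp hp
          rw [Finset.mem_product] at hpmem
          have h4 : (p.1 : ℕ) ≤ i := Fin.le_def.mp (Finset.mem_Iic.mp hpmem.1)
          have h5 : (p.2 : ℕ) ≤ j := Fin.le_def.mp (Finset.mem_Iic.mp hpmem.2)
          have h7 : (p.1 : ℕ) ≠ (i : ℕ) ∨ (p.2 : ℕ) ≠ (j : ℕ) := by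
            by_contra hc
            push_neg at hc
            exact hne (Prod.ext (Fin.ext hc.1) (Fin.ext hc.2))
          have h6 : (p.1 : ℕ) + (p.2 : ℕ) < m := by omega
          exact ih _ h6 p.1 p.2 rfl
        have h8 := hS0 i j
        rw [h1] at h8
        linarith
    ext i j
    exact key _ i j rfl
  obtain ⟨k₀, l₀, hkl₀⟩ := hex
  have hapos : ∀ k, 0 < stepCoef v k := stepCoef_pos hv hvpos
  have hbpos : ∀ l, 0 < stepCoef w l := stepCoef_pos hw hwpos
  -- The main identity.
  have key : ∑ i, ∑ j, M i j * v i * w j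
      = ∑ k, ∑ l, stepCoef v k * stepCoef w l * S k l := by
    calc ∑ i, ∑ j, M i j * v i * w j
        = ∑ i, ∑ j, ∑ k, ∑ l, (if i ≤ k ∧ j ≤ l
            then stepCoef v k * stepCoef w l * M i j else 0) := by
          apply Finset.sum_congr rfl; intro i _
          apply Finset.sum_congr rfl; intro j _
          rw [← telescope v i, ← telescope w j, mul_assoc, Finset.sum_mul_sum,
            Finset.mul_sum]
          apply Finset.sum_congr rfl; intro k _
          rw [Finset.mul_sum]
          apply Finset.sum_congr rfl; intro l _
          by_cases h1 : i ≤ k <;> by_cases h2 : j ≤ l <;> simp [h1, h2] <;> ring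
      _ = ∑ i, ∑ k, ∑ j, ∑ l, (if i ≤ k ∧ j ≤ l
            then stepCoef v k * stepCoef w l * M i j else 0) :=
          Finset.sum_congr rfl fun i _ => Finset.sum_comm
      _ = ∑ k, ∑ i, ∑ j, ∑ l, (if i ≤ k ∧ j ≤ l
            then stepCoef v k * stepCoef w l * M i j else 0) := Finset.sum_comm
      _ = ∑ k, ∑ i, ∑ l, ∑ j, (if i ≤ k ∧ j ≤ l
            then stepCoef v k * stepCoef w l * M i j else 0) :=
          Finset.sum_congr rfl fun k _ => Finset.sum_congr rfl fun i _ => Finset.sum_comm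
      _ = ∑ k, ∑ l, ∑ i, ∑ j, (if i ≤ k ∧ j ≤ l
            then stepCoef v k * stepCoef w l * M i j else 0) :=
          Finset.sum_congr rfl fun k _ => Finset.sum_comm
      _ = ∑ k, ∑ l, stepCoef v k * stepCoef w l * S k l := by
          apply Finset.sum_congr rfl; intro k _
          apply Finset.sum_congr rfl; intro l _
          have hinner : ∀ i : Fin n, ∑ j, (if i ≤ k ∧ j ≤ l
              then stepCoef v k * stepCoef w l * M i j else 0)
              = if i ≤ k then ∑ j ∈ Finset.Iic l, stepCoef v k * stepCoef w l * M i j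
                else 0 := by
            intro i
            by_cases hik : i ≤ k
            · simp only [hik, true_and, if_true]
              rw [← Finset.sum_filter]
              congr 1
              ext j
              simp
            · simp [hik]
          rw [Finset.sum_congr rfl fun i _ => hinner i]
          rw [← Finset.sum_filter]
          have hfil : (Finset.univ : Finset (Fin n)).filter (· ≤ k) = Finset.Iic k := by
            ext p; simp
          rw [hfil, hSdef]
          simp only
          rw [Finset.mul_sum]
          apply Finset.sum_congr rfl; intro i _
          rw [Finset.mul_sum]
  rw [key]
  apply Finset.sum_pos'
  · intro k _
    apply Finset.sum_nonneg
    intro l _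
    exact mul_nonneg (mul_nonneg (hapos k).le (hbpos l).le) (hS k l)
  · refine ⟨k₀, Finset.mem_univ _, ?_⟩
    apply Finset.sum_pos'
    · intro l _
      exact mul_nonneg (mul_nonneg (hapos k₀).le (hbpos l).le) (hS k₀ l)
    · exact ⟨l₀, Finset.mem_univ _, mul_pos (mul_pos (hapos k₀) (hbpos l₀)) hkl₀⟩
end

section
/- Every n×n real matrix M that is doubly hyperdominant with zero excess (off-diagonal entries ≤ 0, all row and column sums equal to 0) can be written as a conic (nonnegative) combination of matrices of the form I - P where P ranges over n×n permutation matrices. -/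
lemma permMatrix_eq_of {n : ℕ} (σ : Equiv.Perm (Fin n)) :
    σ.permMatrix ℝ = Matrix.of fun i j => if σ i = j then (1 : ℝ) else 0 := by
  ext i j
  simp [Equiv.Perm.permMatrix, PEquiv.toMatrix_apply, Equiv.toPEquiv_apply, Option.mem_def]

theorem stmt5 {n : ℕ} (M : Matrix (Fin n) (Fin n) ℝ)
    (hoff : ∀ i j, i ≠ j → M i j ≤ 0)
    (hrow : ∀ i, ∑ j, M i j = 0)
    (hcol : ∀ j, ∑ i, M i j = 0) :
    ∃ (k : ℕ) (α : Fin k → ℝ) (σ : Fin k → Equiv.Perm (Fin n)),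
      (∀ t, 0 ≤ α t) ∧
      M = ∑ t, α t • ((1 : Matrix (Fin n) (Fin n) ℝ) -
        Matrix.of fun i j => if σ t i = j then (1 : ℝ) else 0) := by
  by_cases hM0 : M = 0
  · exact ⟨0, fun t => 0, fun t => t.elim0, fun t => le_refl 0, by simp [hM0]⟩
  · set d : ℝ := ∑ i, ∑ j, |M i j| with hd
    have hnn : ∀ i ∈ Finset.univ, (0:ℝ) ≤ ∑ j, |M i j| :=
      fun i _ => Finset.sum_nonneg fun j _ => abs_nonneg _
    have hdpos : 0 < d := by
      rcases lt_or_ge 0 d with h | h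
      · exact h
      · exfalso; apply hM0
        ext i j
        have hd0 : d = 0 := le_antisymm h (Finset.sum_nonneg hnn)
        have h1 := (Finset.sum_eq_zero_iff_of_nonneg hnn).mp hd0 i (Finset.mem_univ i)
        have h2 := (Finset.sum_eq_zero_iff_of_nonneg
          (fun j _ => abs_nonneg (M i j))).mp h1 j (Finset.mem_univ j)
        simpa using h2
    set A : Matrix (Fin n) (Fin n) ℝ := 1 - d⁻¹ • M with hA
    have sum_one_row : ∀ i : Fin n, ∑ j, (1 : Matrix (Fin n) (Fin n) ℝ) i j = 1 := by
      intro i; simp [Matrix.one_apply]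
    have sum_one_col : ∀ j : Fin n, ∑ i, (1 : Matrix (Fin n) (Fin n) ℝ) i j = 1 := by
      intro j; simp [Matrix.one_apply]
    have hAmem : A ∈ doublyStochastic ℝ (Fin n) := by
      rw [mem_doublyStochastic_iff_sum]
      refine ⟨?_, ?_, ?_⟩
      · intro i j
        by_cases hij : i = j
        · subst hij
          have h1 : M i i ≤ d := by
            calc M i i ≤ |M i i| := le_abs_self _
            _ ≤ ∑ j, |M i j| := Finset.single_le_sum (fun j _ => abs_nonneg (M i j)) (Finset.mem_univ i)
            _ ≤ d := Finset.single_le_sum hnn (Finset.mem_univ i)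
          have : d⁻¹ * M i i ≤ 1 := by
            rw [← inv_mul_cancel₀ hdpos.ne']
            exact mul_le_mul_of_nonneg_left h1 (inv_nonneg.mpr hdpos.le)
          simp only [hA, Matrix.sub_apply, Matrix.smul_apply, Matrix.one_apply_eq, smul_eq_mul]
          linarith
        · have := hoff i j hij
          have h2 : d⁻¹ * M i j ≤ 0 := mul_nonpos_of_nonneg_of_nonpos (inv_nonneg.mpr hdpos.le) this
          simp only [hA, Matrix.sub_apply, Matrix.smul_apply, Matrix.one_apply_ne hij, smul_eq_mul]
          linarith
      · intro i
        simp only [hA, Matrix.sub_apply, Matrix.smul_apply, smul_eq_mul]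
        rw [Finset.sum_sub_distrib, sum_one_row, ← Finset.mul_sum, hrow, mul_zero, sub_zero]
      · intro j
        simp only [hA, Matrix.sub_apply, Matrix.smul_apply, smul_eq_mul]
        rw [Finset.sum_sub_distrib, sum_one_col, ← Finset.mul_sum, hcol, mul_zero, sub_zero]
    obtain ⟨w, hw0, hw1, hwA⟩ := exists_eq_sum_perm_of_mem_doublyStochastic hAmem
    set e := (Fintype.equivFin (Equiv.Perm (Fin n))).symm with he
    refine ⟨Fintype.card (Equiv.Perm (Fin n)), fun t => d * w (e t), fun t => e t,
      fun t => mul_nonneg hdpos.le (hw0 _), ?_⟩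
    have key : ∀ σ' : Equiv.Perm (Fin n),
        (d * w σ') • ((1 : Matrix (Fin n) (Fin n) ℝ) -
          Matrix.of fun i j => if σ' i = j then (1:ℝ) else 0)
        = d • (w σ' • (1 : Matrix (Fin n) (Fin n) ℝ) - w σ' • σ'.permMatrix ℝ) := by
      intro σ'
      rw [permMatrix_eq_of, smul_sub, smul_sub, smul_smul, smul_smul]
    calc M = d • ((1 : Matrix (Fin n) (Fin n) ℝ) - A) := by
            rw [hA, sub_sub_cancel, smul_smul, mul_inv_cancel₀ hdpos.ne', one_smul]
      _ = ∑ σ' : Equiv.Perm (Fin n), (d * w σ') • ((1 : Matrix (Fin n) (Fin n) ℝ) -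
            Matrix.of fun i j => if σ' i = j then (1:ℝ) else 0) := by
          simp_rw [key, ← Finset.smul_sum, Finset.sum_sub_distrib, ← Finset.sum_smul, hw1,
            one_smul, hwA]
      _ = _ := (Equiv.sum_comp e _).symm
end

section
/- Let M be an n×n doubly hyperdominant matrix with zero excess which is nonzero, and let v₁ > ... > vₙ > 0 be strictly decreasing positive reals. Then the quadratic form ∑_{i,j} m_{ij} v_i v_j is strictly positive. -/
theorem stmt8 {n : ℕ} (v : Fin n → ℝ)
    (hv : StrictAnti v) (hvpos : ∀ i, 0 < v i)
    (M : Matrix (Fin n) (Fin n) ℝ) (hM0 : M ≠ 0)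
    (hoff : ∀ i j, i ≠ j → M i j ≤ 0)
    (hrow : ∀ i, ∑ j, M i j = 0)
    (hcol : ∀ j, ∑ i, M i j = 0) :
    0 < ∑ i, ∑ j, M i j * v i * v j := by
  -- find a strictly negative off-diagonal entry
  obtain ⟨a, b, hab, hlt⟩ : ∃ a b, a ≠ b ∧ M a b < 0 := by
    by_contra h
    push_neg at h
    have hzero : ∀ i j, i ≠ j → M i j = 0 := fun i j hij =>
      le_antisymm (hoff i j hij) (h i j hij)
    apply hM0
    ext i j
    rcases eq_or_ne i j with rfl | hij
    · have := hrow i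
      rwa [Finset.sum_eq_single i (fun j _ hj => hzero i j (Ne.symm hj))
        (fun h => absurd (Finset.mem_univ i) h)] at this
    · exact hzero i j hij
  have hnn : ∀ i j : Fin n, 0 ≤ (-M i j) * (v i - v j) ^ 2 := by
    intro i j
    rcases eq_or_ne i j with rfl | hij
    · simp
    · exact mul_nonneg (neg_nonneg.2 (hoff i j hij)) (sq_nonneg _)
  have hpos : 0 < ∑ i, ∑ j, (-M i j) * (v i - v j) ^ 2 := by
    apply Finset.sum_pos'
    · intro i _
      exact Finset.sum_nonneg fun j _ => hnn i j
    · refine ⟨a, Finset.mem_univ a,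
        Finset.sum_pos' (fun j _ => hnn a j) ⟨b, Finset.mem_univ b, ?_⟩⟩
      have hne : v a - v b ≠ 0 := sub_ne_zero.2 (hv.injective.ne hab)
      exact mul_pos (neg_pos.2 hlt)
        (lt_of_le_of_ne (sq_nonneg _) (Ne.symm (pow_ne_zero 2 hne)))
  have hB : ∑ i, ∑ j, M i j * v i ^ 2 = 0 := by
    refine Finset.sum_eq_zero fun i _ => ?_
    rw [← Finset.sum_mul, hrow i, zero_mul]
  have hC : ∑ i, ∑ j, M i j * v j ^ 2 = 0 := by
    rw [Finset.sum_comm]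
    refine Finset.sum_eq_zero fun j _ => ?_
    rw [← Finset.sum_mul, hcol j, zero_mul]
  have hid : ∑ i, ∑ j, (-M i j) * (v i - v j) ^ 2
      = 2 * ∑ i, ∑ j, M i j * v i * v j := by
    have e : ∀ i j : Fin n, (-M i j) * (v i - v j) ^ 2
        = 2 * (M i j * v i * v j) - M i j * v i ^ 2 - M i j * v j ^ 2 :=
      fun i j => by ring
    simp only [e, Finset.sum_sub_distrib, hB, hC, ← Finset.mul_sum, sub_zero]
  linarith
end

section
/- Let σ₀, σ₁, ..., σ_N : H → ℝ be quadratic forms on a real inner product space, given by σ_k(f) = ⟨f, Π_k f⟩ with Π_k bounded self-adjoint linear operators. Suppose the closure of the set K := {(σ₀(f), ..., σ_N(f)) : f ∈ H} is convex, and there exists f* with σ_k(f*) > 0 for k = 1,...,N. If σ₀(f) ≤ 0 whenever σ_k(f) ≥ 0 for all k = 1,...,N, then there exist α₁, ..., α_N ≥ 0 with σ₀(f) + ∑_{k=1}^N α_k σ_k(f) ≤ 0 for all f ∈ H. -/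
private lemma helper_eps (a b : ℝ) (h : ∀ ε : ℝ, 0 < ε → a + ε * b < 0) : a ≤ 0 := by
  by_contra hc
  push_neg at hc
  rcases le_or_gt 0 b with hb | hb
  · have := h 1 one_pos
    nlinarith
  · have hpos : 0 < a / (-2 * b) := by
      apply div_pos hc; linarith
    have h2 := h (a / (-2 * b)) hpos
    have hbne : (-2 : ℝ) * b ≠ 0 := by nlinarith
    have h3 : a / (-2 * b) * b = a * (b / (-2 * b)) := by ring
    have h4 : b / (-2 * b) = -(1/2) := by
      rw [div_eq_iff hbne]; ring
    rw [h3, h4] at h2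
    linarith

theorem stmt10 {H : Type*} [NormedAddCommGroup H] [InnerProductSpace ℝ H] [CompleteSpace H]
    (N : ℕ) (Pk : Fin (N+1) → (H →L[ℝ] H))
    (hsa : ∀ k, IsSelfAdjoint (Pk k))
    (hK : Convex ℝ (closure {x : Fin (N+1) → ℝ | ∃ f : H, ∀ k, x k = inner ℝ f (Pk k f)}))
    (fs : H) (hfs : ∀ k : Fin (N+1), k ≠ 0 → (0 : ℝ) < inner ℝ fs (Pk k fs))
    (hmain : ∀ f : H, (∀ k : Fin (N+1), k ≠ 0 → (0 : ℝ) ≤ inner ℝ f (Pk k f)) →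
      (inner ℝ f (Pk 0 f) : ℝ) ≤ 0) :
    ∃ α : Fin N → ℝ, (∀ k, 0 ≤ α k) ∧
      ∀ f : H, (inner ℝ f (Pk 0 f) : ℝ) + ∑ k : Fin N, α k * (inner ℝ f (Pk k.succ f) : ℝ) ≤ 0 := by
  classical
  set K : Set (Fin (N+1) → ℝ) := {x | ∃ f : H, ∀ k, x k = inner ℝ f (Pk k f)} with hKdef
  set S : Set (Fin (N+1) → ℝ) := {x | ∀ k, 0 < x k} with hSdef
  have hSpi : S = Set.pi Set.univ (fun _ => Set.Ioi (0:ℝ)) := by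
    ext x; simp [hSdef, Set.mem_pi]
  have hSconv : Convex ℝ S := by
    rw [hSpi]; exact convex_pi (fun i _ => convex_Ioi 0)
  have hSopen : IsOpen S := by
    rw [hSpi]; exact isOpen_set_pi Set.finite_univ (fun i _ => isOpen_Ioi)
  have hdisj : Disjoint S (closure K) := by
    refine Disjoint.closure_right ?_ hSopen
    rw [Set.disjoint_left]
    rintro x hx ⟨f, hf⟩
    have h0 := hmain f (fun k _ => (hf k ▸ (hx k).le))
    have h1 := hx 0
    rw [hf 0] at h1
    linarith
  obtain ⟨φ, u, hSu, hKu⟩ := geometric_hahn_banach_open hSconv hSopen hK hdisj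
  have h0K : (0 : Fin (N+1) → ℝ) ∈ K := ⟨0, fun k => by simp⟩
  have hu0 : u ≤ 0 := by
    have := hKu 0 (subset_closure h0K)
    simpa using this
  have h0u : 0 ≤ u := by
    have h := helper_eps (-u) (φ 1) (fun ε hε => by
      have hmem : (ε • (1 : Fin (N+1) → ℝ)) ∈ S := fun k => by simpa using hε
      have := hSu _ hmem
      rw [map_smul] at this
      simp only [smul_eq_mul] at this
      linarith)
    linarith
  have hu : u = 0 := le_antisymm hu0 h0u
  set c : Fin (N+1) → ℝ := fun k => -φ (Pi.single k 1) with hcdef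
  have hc : ∀ k, 0 ≤ c k := by
    intro k
    have h := helper_eps (φ (Pi.single k 1)) (φ 1) (fun ε hε => by
      have hmem : (Pi.single k (1:ℝ) + ε • (1 : Fin (N+1) → ℝ)) ∈ S := fun j => by
        have : (0:ℝ) ≤ (Pi.single k (1:ℝ) : Fin (N+1) → ℝ) j := by
          rw [Pi.single_apply]; split <;> norm_num
        have h2 : ((Pi.single k (1:ℝ) : Fin (N+1) → ℝ) + ε • (1 : Fin (N+1) → ℝ)) j
            = (Pi.single k (1:ℝ) : Fin (N+1) → ℝ) j + ε := by simp
        rw [h2]; linarith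
      have := hSu _ hmem
      rw [map_add, map_smul] at this
      simp only [smul_eq_mul] at this
      linarith)
    simp only [hcdef]
    linarith
  have hrep : ∀ x : Fin (N+1) → ℝ, φ x = ∑ k, x k * φ (Pi.single k 1) := by
    intro x
    have hx : x = ∑ k, x k • (Pi.single k (1:ℝ) : Fin (N+1) → ℝ) := by
      funext j
      simp [Finset.sum_apply, Pi.single_apply]
    conv_lhs => rw [hx]
    rw [map_sum]
    simp [map_smul, smul_eq_mul]
  have hKle : ∀ f : H, c 0 * (inner ℝ f (Pk 0 f) : ℝ)
      + ∑ k : Fin N, c k.succ * (inner ℝ f (Pk k.succ f) : ℝ) ≤ 0 := by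
    intro f
    have hκ : (fun k => (inner ℝ f (Pk k f) : ℝ)) ∈ K := ⟨f, fun k => rfl⟩
    have h := hKu _ (subset_closure hκ)
    rw [hu, hrep] at h
    rw [Fin.sum_univ_succ] at h
    have e1 : ∀ k : Fin N, (inner ℝ f (Pk k.succ f) : ℝ) * φ (Pi.single k.succ 1)
        = -(c k.succ * (inner ℝ f (Pk k.succ f) : ℝ)) := by
      intro k; simp only [hcdef]; ring
    rw [Finset.sum_congr rfl (fun k _ => e1 k), Finset.sum_neg_distrib] at h
    have e0 : (inner ℝ f (Pk 0 f) : ℝ) * φ (Pi.single 0 1)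
        = -(c 0 * (inner ℝ f (Pk 0 f) : ℝ)) := by simp only [hcdef]; ring
    rw [e0] at h
    linarith
  have hc0 : 0 < c 0 := by
    rcases lt_or_eq_of_le (hc 0) with h | h
    · exact h
    have hs := hKle fs
    rw [← h, zero_mul, zero_add] at hs
    have hterm : ∀ k : Fin N, c k.succ * (inner ℝ fs (Pk k.succ fs) : ℝ) = 0 := by
      have hnn : ∀ k : Fin N, k ∈ Finset.univ → (0:ℝ) ≤ c k.succ * (inner ℝ fs (Pk k.succ fs) : ℝ) :=
        fun k _ => mul_nonneg (hc _) (hfs k.succ (Fin.succ_ne_zero k)).le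
      have hz : ∑ k : Fin N, c k.succ * (inner ℝ fs (Pk k.succ fs) : ℝ) = 0 :=
        le_antisymm hs (Finset.sum_nonneg hnn)
      intro k
      exact (Finset.sum_eq_zero_iff_of_nonneg hnn).mp hz k (Finset.mem_univ k)
    have hcz : ∀ k, c k = 0 := by
      intro k
      induction k using Fin.cases with
      | zero => exact h.symm
      | succ k =>
        have := hterm k
        have hpos := hfs k.succ (Fin.succ_ne_zero k)
        rcases mul_eq_zero.mp this with h1 | h1
        · exact h1
        · exact absurd h1 (ne_of_gt hpos)
    have hφ1 : φ 1 = 0 := by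
      rw [hrep 1]
      apply Finset.sum_eq_zero
      intro k _
      have := hcz k
      simp only [hcdef] at this
      simp [Pi.one_apply]
      linarith
    have h1S : (1 : Fin (N+1) → ℝ) ∈ S := fun k => by simp
    have := hSu _ h1S
    rw [hφ1, hu] at this
    exact absurd this (lt_irrefl 0)
  refine ⟨fun k => c k.succ / c 0, fun k => div_nonneg (hc _) hc0.le, ?_⟩
  intro f
  have h := hKle f
  have key : c 0 * ((inner ℝ f (Pk 0 f) : ℝ)
      + ∑ k : Fin N, c k.succ / c 0 * (inner ℝ f (Pk k.succ f) : ℝ))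
      = c 0 * (inner ℝ f (Pk 0 f) : ℝ)
      + ∑ k : Fin N, c k.succ * (inner ℝ f (Pk k.succ f) : ℝ) := by
    rw [mul_add, Finset.mul_sum]
    congr 1
    apply Finset.sum_congr rfl
    intro k _
    field_simp
  have : (inner ℝ f (Pk 0 f) : ℝ)
      + ∑ k : Fin N, c k.succ / c 0 * (inner ℝ f (Pk k.succ f) : ℝ)
      = (c 0 * ((inner ℝ f (Pk 0 f) : ℝ)
      + ∑ k : Fin N, c k.succ / c 0 * (inner ℝ f (Pk k.succ f) : ℝ))) / c 0 := by
    field_simp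
  rw [this, key]
  exact div_nonpos_of_nonpos_of_nonneg h hc0.le
end

section
/- Let σ_k(f) = ⟨f, Π_k f⟩ for k = 0,...,N be quadratic forms on ℓ²(ℤ,ℝ) where each Π_k is a bounded self-adjoint linear operator commuting with the shift S_{T·T₀} for fixed positive integers T, T₀. Then the closure of the set K = {(σ₀(f),...,σ_N(f)) : f ∈ ℓ²} is convex. -/
open Filter Topology

local notation "H" => lp (fun _ : ℤ => ℝ) 2

theorem shift_inner (S : ℤ → (H →L[ℝ] H))
    (hS : ∀ (τ : ℤ) (f : H) (k : ℤ), (S τ f) k = f (k - τ))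
    (t : ℤ) (u v : H) : (inner ℝ (S t u) (S t v) : ℝ) = inner ℝ u v := by
  rw [lp.inner_eq_tsum, lp.inner_eq_tsum]
  simp only [hS]
  exact (Equiv.subRight t).tsum_eq fun k => (inner ℝ (u k) (v k) : ℝ)

theorem shift_norm (S : ℤ → (H →L[ℝ] H))
    (hS : ∀ (τ : ℤ) (f : H) (k : ℤ), (S τ f) k = f (k - τ))
    (t : ℤ) (v : H) : ‖S t v‖ = ‖v‖ := by
  rw [@norm_eq_sqrt_re_inner ℝ, @norm_eq_sqrt_re_inner ℝ, shift_inner S hS]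

theorem S_zero (S : ℤ → (H →L[ℝ] H))
    (hS : ∀ (τ : ℤ) (f : H) (k : ℤ), (S τ f) k = f (k - τ)) :
    S 0 = ContinuousLinearMap.id ℝ H := by
  ext f k; rw [hS]; simp

theorem S_add (S : ℤ → (H →L[ℝ] H))
    (hS : ∀ (τ : ℤ) (f : H) (k : ℤ), (S τ f) k = f (k - τ)) (x y : ℤ) :
    S (x + y) = S x ∘L S y := by
  ext f k
  simp only [ContinuousLinearMap.coe_comp', Function.comp_apply, hS]
  ring_nf

theorem S_comm (S : ℤ → (H →L[ℝ] H))
    (hS : ∀ (τ : ℤ) (f : H) (k : ℤ), (S τ f) k = f (k - τ))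
    (τ : ℤ) (P : H →L[ℝ] H) (hP : P ∘L S τ = S τ ∘L P) (n : ℕ) :
    P ∘L S ((n : ℤ) * τ) = S ((n : ℤ) * τ) ∘L P := by
  induction n with
  | zero => simp [S_zero S hS]
  | succ n ih =>
      have : ((n + 1 : ℕ) : ℤ) * τ = (n : ℤ) * τ + τ := by push_cast; ring
      rw [this, S_add S hS, ← ContinuousLinearMap.comp_assoc, ih,
        ContinuousLinearMap.comp_assoc, hP, ← ContinuousLinearMap.comp_assoc]

theorem weak_zero (S : ℤ → (H →L[ℝ] H))
    (hS : ∀ (τ : ℤ) (f : H) (k : ℤ), (S τ f) k = f (k - τ))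
    (t : ℕ → ℤ) (ht : Tendsto t atTop atTop) (u v : H) :
    Tendsto (fun n => (inner ℝ u (S (t n) v) : ℝ)) atTop (𝓝 0) := by
  -- coordinates of v tend to 0 cofinitely
  have hv2 : Summable (fun i : ℤ => v i * v i) := by
    simpa [RCLike.inner_apply, sq] using lp.summable_inner (𝕜 := ℝ) v v
  have hv0 : Tendsto (fun m : ℤ => v m) cofinite (𝓝 0) := by
    rw [tendsto_zero_iff_abs_tendsto_zero]
    have := (Real.continuous_sqrt.tendsto 0).comp hv2.tendsto_cofinite_zero
    simpa [Function.comp_def, Real.sqrt_mul_self_eq_abs] using this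
  have hcoord : ∀ k : ℤ, Tendsto (fun n => v (k - t n)) atTop (𝓝 0) := by
    intro k
    apply hv0.comp
    have h1 : Tendsto (fun n => k - t n) atTop atBot :=
      tendsto_atBot_add_const_left _ k (tendsto_neg_atTop_atBot.comp ht)
    exact h1.mono_right (by rw [Int.cofinite_eq]; exact le_sup_left)
  rw [NormedAddCommGroup.tendsto_nhds_zero]
  intro ε hε
  have hδ : 0 < ε / (‖v‖ + 1) := by positivity
  -- finite approximation of u
  obtain ⟨F, hF⟩ := (Metric.tendsto_nhds.mp
    ((lp.hasSum_single ENNReal.ofNat_ne_top u)) _ hδ).exists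
  set w : H := ∑ k ∈ F, lp.single 2 k (u k) with hw
  have hwinner : ∀ n, (inner ℝ w (S (t n) v) : ℝ) = ∑ k ∈ F, u k * v (k - t n) := by
    intro n
    rw [hw, sum_inner]
    refine Finset.sum_congr rfl fun k _ => ?_
    rw [lp.inner_single_left, RCLike.inner_apply, hS]
    simp [mul_comm]
  have hwlim : Tendsto (fun n => (inner ℝ w (S (t n) v) : ℝ)) atTop (𝓝 0) := by
    simp only [hwinner]
    have : Tendsto (fun n => ∑ k ∈ F, u k * v (k - t n)) atTop (𝓝 (∑ k ∈ F, u k * 0)) :=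
      tendsto_finset_sum _ fun k _ => (hcoord k).const_mul _
    simpa using this
  have hrest : ∀ n, ‖(inner ℝ (u - w) (S (t n) v) : ℝ)‖ ≤ (ε / (‖v‖ + 1)) * ‖v‖ := by
    intro n
    calc ‖(inner ℝ (u - w) (S (t n) v) : ℝ)‖ ≤ ‖u - w‖ * ‖S (t n) v‖ := norm_inner_le_norm _ _
    _ ≤ (ε / (‖v‖ + 1)) * ‖v‖ := by
        rw [shift_norm S hS]
        apply mul_le_mul_of_nonneg_right _ (norm_nonneg _)
        rw [← dist_eq_norm']
        exact le_of_lt hF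
  rw [Metric.tendsto_nhds] at hwlim
  filter_upwards [hwlim _ hδ] with n hn
  have : (inner ℝ u (S (t n) v) : ℝ) = inner ℝ (u - w) (S (t n) v) + inner ℝ w (S (t n) v) := by
    rw [← inner_add_left]; norm_num
  rw [this]
  calc ‖(inner ℝ (u - w) (S (t n) v) : ℝ) + inner ℝ w (S (t n) v)‖
      ≤ ‖(inner ℝ (u - w) (S (t n) v) : ℝ)‖ + ‖(inner ℝ w (S (t n) v) : ℝ)‖ := norm_add_le _ _
    _ < (ε / (‖v‖ + 1)) * ‖v‖ + ε / (‖v‖ + 1) := by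
        apply add_lt_add_of_le_of_lt (hrest n)
        simpa [Real.dist_eq] using hn
    _ = ε / (‖v‖ + 1) * (‖v‖ + 1) := by ring
    _ = ε := div_mul_cancel₀ _ (by positivity)


theorem stmt14
    (S : ℤ → (lp (fun _ : ℤ => ℝ) 2 →L[ℝ] lp (fun _ : ℤ => ℝ) 2))
    (hS : ∀ (τ : ℤ) (f : lp (fun _ : ℤ => ℝ) 2) (k : ℤ), (S τ f) k = f (k - τ))
    (N : ℕ) (T T₀ : ℕ) (hT : 0 < T) (hT₀ : 0 < T₀)
    (Pk : Fin (N+1) → (lp (fun _ : ℤ => ℝ) 2 →L[ℝ] lp (fun _ : ℤ => ℝ) 2))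
    (hsa : ∀ k, IsSelfAdjoint (Pk k))
    (hcomm : ∀ k, Pk k ∘L S ((T : ℤ) * (T₀ : ℤ)) = S ((T : ℤ) * (T₀ : ℤ)) ∘L Pk k) :
    Convex ℝ (closure {x : Fin (N+1) → ℝ |
      ∃ f : lp (fun _ : ℤ => ℝ) 2, ∀ k, x k = inner ℝ f (Pk k f)}) := by
  set τ : ℤ := (T : ℤ) * (T₀ : ℤ) with hτdef
  have hτ : 1 ≤ τ := by
    have h1 : (1:ℤ) ≤ (T:ℤ) := by exact_mod_cast hT
    have h2 : (1:ℤ) ≤ (T₀:ℤ) := by exact_mod_cast hT₀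
    nlinarith
  set K := {x : Fin (N+1) → ℝ |
      ∃ f : lp (fun _ : ℤ => ℝ) 2, ∀ k, x k = inner ℝ f (Pk k f)} with hK
  intro x hx y hy a b ha hb hab
  have key : ∀ x' ∈ K, ∀ y' ∈ K, a • x' + b • y' ∈ closure K := by
    rintro x' ⟨f₁, hf₁⟩ y' ⟨f₂, hf₂⟩
    set c := Real.sqrt a with hc
    set d := Real.sqrt b with hd
    set t : ℕ → ℤ := fun n => (n : ℤ) * τ with htdef
    have ht : Tendsto t atTop atTop :=
      tendsto_atTop_mono (fun n => le_mul_of_one_le_right (Int.natCast_nonneg n) hτ)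
        tendsto_natCast_atTop_atTop
    have hPsym : ∀ (k) (z z' : lp (fun _ : ℤ => ℝ) 2),
        (inner ℝ (Pk k z) z' : ℝ) = inner ℝ z (Pk k z') := by
      intro k z z'
      conv_lhs => rw [← ContinuousLinearMap.isSelfAdjoint_iff'.mp (hsa k)]
      exact ContinuousLinearMap.adjoint_inner_left _ _ _
    have hPS : ∀ (k) (n) (f : lp (fun _ : ℤ => ℝ) 2),
        Pk k (S (t n) f) = S (t n) (Pk k f) := by
      intro k n f
      have h := S_comm S hS τ (Pk k) (hcomm k) n
      simpa using DFunLike.congr_fun h f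
    set g : ℕ → lp (fun _ : ℤ => ℝ) 2 := fun n => c • f₁ + d • S (t n) f₂ with hg
    have hgk : ∀ n k, (inner ℝ (g n) (Pk k (g n)) : ℝ)
        = a * x' k + b * y' k + (2 * (c * d)) * inner ℝ (Pk k f₁) (S (t n) f₂) := by
      intro n k
      simp only [hg, map_add, map_smul, inner_add_left, inner_add_right,
        real_inner_smul_left, real_inner_smul_right]
      rw [hPS k n f₂, shift_inner S hS]
      have h1 : (inner ℝ f₁ (S (t n) (Pk k f₂)) : ℝ) = inner ℝ (Pk k f₁) (S (t n) f₂) := by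
        rw [← hPS k n f₂]
        exact (hPsym k f₁ (S (t n) f₂)).symm
      have h2 : (inner ℝ (S (t n) f₂) (Pk k f₁) : ℝ) = inner ℝ (Pk k f₁) (S (t n) f₂) :=
        real_inner_comm _ _
      have hca : c * c = a := Real.mul_self_sqrt ha
      have hcb : d * d = b := Real.mul_self_sqrt hb
      rw [h1, h2, hf₁ k, hf₂ k]
      linear_combination (inner ℝ f₁ (Pk k f₁) : ℝ) * hca + (inner ℝ f₂ (Pk k f₂) : ℝ) * hcb
    have hlim : Tendsto (fun n => fun k => (inner ℝ (g n) (Pk k (g n)) : ℝ)) atTop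
        (𝓝 (a • x' + b • y')) := by
      rw [tendsto_pi_nhds]
      intro k
      simp only [hgk]
      have hz := (weak_zero S hS t ht (Pk k f₁) f₂).const_mul (2 * (c * d))
      have h3 := Tendsto.add
        (tendsto_const_nhds (x := a * x' k + b * y' k) (f := (atTop : Filter ℕ))) hz
      simpa using h3
    exact mem_closure_of_tendsto hlim (Eventually.of_forall fun n => ⟨g n, fun k => rfl⟩)
  have := map_mem_closure₂ (f := fun p q : Fin (N+1) → ℝ => a • p + b • q)
    (u := closure K) (by fun_prop) hx hy key
  simpa [closure_closure] using this
end
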